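/- For every z ∈ ℍ with Im z = q or Im z = q⁻¹, one has log(1 + (Re z)²) − log q ≤ dist(z, i) ≤ log q + 2·log(1 + |Re z|). -/

import Mathlib

open UpperHalfPlane

theorem log_le_dist_I_le_log (q : ℝ) (hq : 1 < q) (z : UpperHalfPlane)
    (hz : z.im = q ∨ z.im = q⁻¹) :
    Real.log (1 + z.re ^ 2) - Real.log q ≤ dist z UpperHalfPlane.I ∧
      dist z UpperHalfPlane.I ≤ Real.log q + 2 * Real.log (1 + |z.re|) := by
  have hq0 : 0 < q := lt_trans one_pos hq
  set x := z.re with hx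
  set y := z.im with hy
  have hy0 : 0 < y := z.im_pos
  have hd0 : 0 ≤ dist z UpperHalfPlane.I := dist_nonneg
  constructor
  · -- lower bound
    have hcosh : Real.cosh (dist z UpperHalfPlane.I) = ((x - 0) ^ 2 + y ^ 2 + 1 ^ 2) / (2 * y * 1) := by
      rw [cosh_dist' z UpperHalfPlane.I, I_re, I_im]
    have hsinh : Real.cosh (dist z UpperHalfPlane.I) - 1 ≤ Real.sinh (dist z UpperHalfPlane.I) := by
      have := Real.cosh_sub_sinh (dist z UpperHalfPlane.I)
      have h1 : Real.exp (-(dist z UpperHalfPlane.I)) ≤ 1 := by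
        rw [Real.exp_le_one_iff]; linarith
      linarith
    have hexp : 2 * Real.cosh (dist z UpperHalfPlane.I) - 1 ≤ Real.exp (dist z UpperHalfPlane.I) := by
      have := Real.sinh_add_cosh (dist z UpperHalfPlane.I)
      linarith
    have hkey : (1 + x ^ 2) / q ≤ 2 * Real.cosh (dist z UpperHalfPlane.I) - 1 := by
      rw [hcosh]
      rcases hz with h | h
      · rw [h]
        rw [div_le_iff₀ hq0]
        have : 2 * (((x - 0) ^ 2 + q ^ 2 + 1 ^ 2) / (2 * q * 1)) = ((x - 0) ^ 2 + q ^ 2 + 1 ^ 2) / q := by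
          field_simp
        rw [this, sub_mul, div_mul_cancel₀ _ (ne_of_gt hq0)]
        nlinarith
      · rw [h]
        have hqi : (0:ℝ) < q⁻¹ := inv_pos.mpr hq0
        rw [div_le_iff₀ hq0]
        have : 2 * (((x - 0) ^ 2 + q⁻¹ ^ 2 + 1 ^ 2) / (2 * q⁻¹ * 1)) - 1 = ((x - 0) ^ 2 + q⁻¹ ^ 2 + 1 ^ 2) * q - 1 := by
          field_simp
        rw [this]
        have h2 : q⁻¹ * q = 1 := inv_mul_cancel₀ (ne_of_gt hq0)
        have h3 : q⁻¹ ^ 2 * q ^ 2 = 1 := by rw [← mul_pow, h2]; norm_num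
        have h4 : (0:ℝ) ≤ q ^ 2 - 1 := by nlinarith
        nlinarith [h3, h4, sq_nonneg x, mul_nonneg (sq_nonneg x) h4]
    have hpos : (0:ℝ) < (1 + x ^ 2) / q := by positivity
    have := Real.log_le_log hpos (le_trans hkey hexp)
    rwa [Real.log_exp, Real.log_div (by positivity) (ne_of_gt hq0)] at this
  · -- upper bound
    set w : UpperHalfPlane := UpperHalfPlane.mk ⟨x, 1⟩ one_pos with hw
    have hwre : w.re = x := rfl
    have hwim : w.im = 1 := rfl
    have htri : dist z UpperHalfPlane.I ≤ dist z w + dist w UpperHalfPlane.I :=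
      dist_triangle z w UpperHalfPlane.I
    have h1 : dist z w = Real.log q := by
      rw [UpperHalfPlane.dist_of_re_eq (by rw [hwre]), hwim, Real.log_one, Real.dist_eq, sub_zero, ← hy]
      rcases hz with h | h
      · rw [h, abs_of_nonneg (Real.log_nonneg hq.le)]
      · rw [h, Real.log_inv, abs_neg, abs_of_nonneg (Real.log_nonneg hq.le)]
    have hx1 : (0:ℝ) < 1 + |x| := by positivity
    have h2 : dist w UpperHalfPlane.I ≤ 2 * Real.log (1 + |x|) := by
      rw [UpperHalfPlane.dist_le_iff_le_sinh]
      have hdc : dist (w : ℂ) (UpperHalfPlane.I : ℂ) = |x| := by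
        rw [Complex.dist_eq, UpperHalfPlane.coe_I]
        have : (w : ℂ) - Complex.I = (x : ℝ) := by
          apply Complex.ext <;> simp [hw]
        rw [this, Complex.norm_real, Real.norm_eq_abs]
      rw [hdc, hwim, UpperHalfPlane.I_im, mul_one, Real.sqrt_one, mul_one]
      rw [mul_div_cancel_left₀ _ (two_ne_zero), Real.sinh_eq, Real.exp_log hx1, Real.exp_neg,
        Real.exp_log hx1]
      rw [div_le_div_iff_of_pos_right two_pos]
      have : (1 + |x|)⁻¹ ≤ 1 := by
        rw [inv_le_one_iff₀]; right; linarith [abs_nonneg x]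
      linarith
    linarith
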